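/- Let T be a PPS with ∂^s(P) = ∂^w(P) and F̂ the extended max Russell graph measure. Then F̂ satisfies strong monotonicity: for all (x,y), (x',y') ∈ T with (x',−y') ≤ (x,−y) componentwise and (x',−y') ≠ (x,−y), one has F̂(x',y';T) > F̂(x,y;T). -/

import Mathlib

noncomputable section

open Finset

/-- A point in input-output space: `m` inputs and `s` outputs. -/
abbrev Pt (m s : ℕ) := (Fin m → ℝ) × (Fin s → ℝ)

/-- Standard inner product. -/
def dot {n : ℕ} (v x : Fin n → ℝ) : ℝ := ∑ i, v i * x i

/-- Strongly efficient frontier: non-dominated points of `T`. -/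
def strongF {m s : ℕ} (T : Set (Pt m s)) : Set (Pt m s) :=
  {p | p ∈ T ∧ ∀ q : Pt m s,
    (∀ i, q.1 i ≤ p.1 i) → (∀ r, p.2 r ≤ q.2 r) → q ≠ p → q ∉ T}

/-- Weakly efficient frontier of `T`. -/
def weakF {m s : ℕ} (T : Set (Pt m s)) : Set (Pt m s) :=
  {p | p ∈ T ∧ ∀ q : Pt m s,
    (∀ i, q.1 i < p.1 i) → (∀ r, p.2 r < q.2 r) → q ∉ T}

/-- The polyhedron `P = {(x,y) : vˡ·x − uˡ·y − σˡ ≥ 0, l = 1,…,L}`. -/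
def polyP {m s L : ℕ} (v : Fin L → Fin m → ℝ) (u : Fin L → Fin s → ℝ)
    (σ : Fin L → ℝ) : Set (Pt m s) :=
  {p | ∀ l, 0 ≤ dot (v l) p.1 - dot (u l) p.2 - σ l}

/-- `T = P ∩ (ℝ^m_+ × (ℝ^s_+ \ {0}))`. -/
def TSet {m s L : ℕ} (v : Fin L → Fin m → ℝ) (u : Fin L → Fin s → ℝ)
    (σ : Fin L → ℝ) : Set (Pt m s) :=
  {p | p ∈ polyP v u σ ∧ (∀ i, 0 ≤ p.1 i) ∧ (∀ r, 0 ≤ p.2 r) ∧ p.2 ≠ 0}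

lemma dot_mono {n : ℕ} {v a b : Fin n → ℝ} (hv : ∀ i, 0 ≤ v i)
    (h : ∀ i, a i ≤ b i) : dot v a ≤ dot v b :=
  Finset.sum_le_sum fun i _ => mul_le_mul_of_nonneg_left (h i) (hv i)

lemma dot_update {n : ℕ} (u a : Fin n → ℝ) (r0 : Fin n) (c : ℝ) :
    dot u (Function.update a r0 c) = dot u a + u r0 * (c - a r0) := by
  have h : ∑ r, (u r * Function.update a r0 c r - u r * a r) = u r0 * (c - a r0) := by
    rw [Finset.sum_congr rfl
      (g := fun r => if r = r0 then u r * (c - a r) else 0)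
      (fun r _ => by
        rcases eq_or_ne r r0 with hr | hr
        · subst hr; simp [Function.update_self]; ring
        · simp [Function.update_of_ne hr, hr])]
    rw [Finset.sum_ite_eq' univ r0]
    simp
  have h2 : ∑ r, (u r * Function.update a r0 c r - u r * a r)
      = dot u (Function.update a r0 c) - dot u a := by
    unfold dot; rw [Finset.sum_sub_distrib]
  rw [h2] at h; linarith

lemma polyP_disposal {m s L : ℕ} {v : Fin L → Fin m → ℝ} {u : Fin L → Fin s → ℝ}
    {σ : Fin L → ℝ} (hpos : ∀ l, (∀ i, 0 < v l i) ∧ (∀ r, 0 < u l r))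
    {p q : Pt m s} (hp : p ∈ polyP v u σ)
    (h1 : ∀ i, p.1 i ≤ q.1 i) (h2 : ∀ r, q.2 r ≤ p.2 r) : q ∈ polyP v u σ := by
  intro l
  have hv := dot_mono (fun i => (hpos l).1 i |>.le) h1
  have hu := dot_mono (fun r => (hpos l).2 r |>.le) h2
  have := hp l
  linarith

/-- Under `strongF P = weakF P`, every strongly efficient point of `T`
is strongly efficient in `P`. -/
lemma strongT_subset_strongP {m s L : ℕ} {v : Fin L → Fin m → ℝ}
    {u : Fin L → Fin s → ℝ} {σ : Fin L → ℝ}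
    (hpos : ∀ l, (∀ i, 0 < v l i) ∧ (∀ r, 0 < u l r))
    (hPfront : strongF (polyP v u σ) = weakF (polyP v u σ)) :
    strongF (TSet v u σ) ⊆ strongF (polyP v u σ) := by
  intro p hp
  rw [hPfront]
  obtain ⟨hpT, hdomi⟩ := hp
  obtain ⟨hpP, hp1, hp2, hp2ne⟩ := hpT
  refine ⟨hpP, ?_⟩
  intro w hw1 hw2 hwP
  set w' : Pt m s := (fun i => max (w.1 i) 0, w.2) with hw'
  have hw'P : w' ∈ polyP v u σ :=
    polyP_disposal hpos hwP (fun i => le_max_left _ _) (fun r => le_refl _)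
  obtain ⟨r0, hr0⟩ : ∃ r, p.2 r ≠ 0 := Function.ne_iff.mp hp2ne
  have hr0pos : 0 < p.2 r0 := lt_of_le_of_ne (hp2 r0) (Ne.symm hr0)
  have hw'T : w' ∈ TSet v u σ := by
    refine ⟨hw'P, fun i => le_max_right _ _, fun r => le_trans (hp2 r) (hw2 r).le, ?_⟩
    intro h0
    have h1 : w.2 r0 = 0 := congrFun h0 r0
    have := hw2 r0
    linarith
  refine hdomi w' (fun i => max_le (hw1 i).le (hp1 i)) (fun r => (hw2 r).le) ?_ hw'T
  intro h
  have h1 : w.2 r0 = p.2 r0 := congrFun (congrArg Prod.snd h) r0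
  have := hw2 r0; linarith

lemma strongP_mem_strongT {m s L : ℕ} {v : Fin L → Fin m → ℝ}
    {u : Fin L → Fin s → ℝ} {σ : Fin L → ℝ}
    {p : Pt m s} (hpP : p ∈ strongF (polyP v u σ)) (hpT : p ∈ TSet v u σ) :
    p ∈ strongF (TSet v u σ) :=
  ⟨hpT, fun q h1 h2 hne hqT => hpP.2 q h1 h2 hne hqT.1⟩

set_option maxHeartbeats 2000000

/-- strong monotonicity of the extended max Russell graph measure. -/
theorem stmt10 {m s L : ℕ} (hms : 0 < m + s)
    (v : Fin L → Fin m → ℝ) (u : Fin L → Fin s → ℝ) (σ : Fin L → ℝ)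
    (hpos : ∀ l, (∀ i, 0 < v l i) ∧ (∀ r, 0 < u l r))
    (hσ : ∀ l, ∃ p ∈ polyP v u σ, dot (v l) p.1 - dot (u l) p.2 = σ l)
    (hPfront : strongF (polyP v u σ) = weakF (polyP v u σ))
    (x x' : Fin m → ℝ) (y y' : Fin s → ℝ)
    (hxy : (x, y) ∈ TSet v u σ) (hxy' : (x', y') ∈ TSet v u σ)
    (hdom : (∀ i, x' i ≤ x i) ∧ (∀ r, y r ≤ y' r))
    (hne : (x', y') ≠ (x, y))
    (F F' : ℝ)
    (hF : IsGreatest {t : ℝ | ∃ (θ : Fin m → ℝ) (φ : Fin s → ℝ),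
        (∀ i, 0 ≤ θ i ∧ θ i ≤ 1) ∧ (∀ r, 1 ≤ φ r) ∧
        ((fun i => θ i * x i), (fun r => φ r * y r)) ∈ strongF (TSet v u σ) ∧
        t = (1 / (m + s : ℝ)) * ((∑ i, θ i) + ∑ r, 1 / φ r)} F)
    (hF' : IsGreatest {t : ℝ | ∃ (θ : Fin m → ℝ) (φ : Fin s → ℝ),
        (∀ i, 0 ≤ θ i ∧ θ i ≤ 1) ∧ (∀ r, 1 ≤ φ r) ∧
        ((fun i => θ i * x' i), (fun r => φ r * y' r)) ∈ strongF (TSet v u σ) ∧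
        t = (1 / (m + s : ℝ)) * ((∑ i, θ i) + ∑ r, 1 / φ r)} F') :
    F < F' := by
  obtain ⟨hFmem, hFub⟩ := hF
  obtain ⟨θs, φs, hθs, hφs, hpstar, hFval⟩ := hFmem
  obtain ⟨hxyP, hx0, hy0, hyne⟩ := hxy
  obtain ⟨hxy'P, hx'0, hy'0, hy'ne⟩ := hxy'
  have hmsR : (0:ℝ) < (m:ℝ) + s := by exact_mod_cast hms
  have hc : (0:ℝ) < 1 / ((m:ℝ) + s) := by positivity
  obtain ⟨r0, hr0ne⟩ : ∃ r, y' r ≠ 0 := Function.ne_iff.mp hy'ne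
  have hr0 : 0 < y' r0 := lt_of_le_of_ne (hy'0 r0) (Ne.symm hr0ne)
  have hpstarP : ((fun i => θs i * x i, fun r => φs r * y r) : Pt m s)
      ∈ strongF (polyP v u σ) := strongT_subset_strongP hpos hPfront hpstar
  -- L ≥ 1
  haveI hLne : Nonempty (Fin L) := by
    by_contra hEmpty
    have hq : ((fun i => θs i * x i - 1, fun r => φs r * y r + 1) : Pt m s)
        ∈ polyP v u σ := fun l => absurd (Nonempty.intro l) hEmpty
    refine hpstarP.2 _ (fun i => by simp) (fun r => by simp) ?_ hq
    intro h
    have h1 : φs r0 * y r0 + 1 = φs r0 * y r0 := congrFun (congrArg Prod.snd h) r0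
    linarith
  by_cases hq0 : ((fun i => θs i * x' i, fun r => φs r * y' r) : Pt m s) ∈ polyP v u σ
  · -- Case B2 : the shrunk point is still in P, hence it must equal p*.
    have hq0T : ((fun i => θs i * x' i, fun r => φs r * y' r) : Pt m s) ∈ TSet v u σ := by
      refine ⟨hq0, fun i => mul_nonneg (hθs i).1 (hx'0 i),
        fun r => mul_nonneg (by linarith [hφs r]) (hy'0 r), ?_⟩
      intro h0
      have h1 : φs r0 * y' r0 = 0 := congrFun h0 r0
      have h2 : 0 < φs r0 * y' r0 := mul_pos (by linarith [hφs r0]) hr0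
      linarith
    have heq : ((fun i => θs i * x' i, fun r => φs r * y' r) : Pt m s)
        = (fun i => θs i * x i, fun r => φs r * y r) := by
      by_contra hne'
      exact hpstar.2 _ (fun i => mul_le_mul_of_nonneg_left (hdom.1 i) (hθs i).1)
        (fun r => mul_le_mul_of_nonneg_left (hdom.2 r) (by linarith [hφs r])) hne' hq0T
    have hyy : y' = y := by
      funext r
      have h1 : φs r * y' r = φs r * y r := congrFun (congrArg Prod.snd heq) r
      have h2 := hφs r
      have h3 : φs r ≠ 0 := by linarith
      exact mul_left_cancel₀ h3 h1
    have hxne : x' ≠ x := fun h => hne (by rw [h, hyy])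
    obtain ⟨i0, hi0⟩ : ∃ i, x' i ≠ x i := Function.ne_iff.mp hxne
    have hi0lt : x' i0 < x i0 := lt_of_le_of_ne (hdom.1 i0) hi0
    have hθ0 : θs i0 = 0 := by
      have h1 : θs i0 * x' i0 = θs i0 * x i0 := congrFun (congrArg Prod.fst heq) i0
      by_contra h
      exact hi0 (mul_left_cancel₀ h h1)
    -- raise input i0 fully, then push output r0 to the frontier
    set θh : Fin m → ℝ := Function.update θs i0 1 with hθh
    set q1 : Pt m s := (fun i => θh i * x' i, fun r => φs r * y' r) with hq1
    have hq1P : q1 ∈ polyP v u σ := by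
      refine polyP_disposal hpos hq0 (fun i => ?_) (fun r => le_refl _)
      rcases eq_or_ne i i0 with hi | hi
      · subst hi; simp [hq1, hθh, Function.update_self, hθ0, hx'0 i]
      · simp [hq1, hθh, Function.update_of_ne hi]
    set slk : Fin L → ℝ := fun l => dot (v l) q1.1 - dot (u l) q1.2 - σ l with hslk
    have hslk0 : ∀ l, 0 ≤ slk l := hq1P
    have hBU : (univ : Finset (Fin L)).Nonempty := univ_nonempty
    set cs : ℝ := univ.inf' hBU (fun l => slk l / u l r0) with hcs
    have hcs0 : 0 ≤ cs :=
      Finset.le_inf' hBU _ fun l _ => div_nonneg (hslk0 l) ((hpos l).2 r0).le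
    have hcsle : ∀ l, cs ≤ slk l / u l r0 := fun l => Finset.inf'_le _ (mem_univ l)
    set φh : Fin s → ℝ := Function.update φs r0 (φs r0 + cs / y' r0) with hφh
    have hφh1 : ∀ r, 1 ≤ φh r := by
      intro r
      rcases eq_or_ne r r0 with hr | hr
      · subst hr
        simp only [hφh, Function.update_self]
        have h9 : 0 ≤ cs / y' r := div_nonneg hcs0 hr0.le
        linarith [hφs r]
      · simp [hφh, Function.update_of_ne hr, hφs r]
    set z : Pt m s := (fun i => θh i * x' i, fun r => φh r * y' r) with hz
    have hz2eq : z.2 = Function.update q1.2 r0 (q1.2 r0 + cs) := by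
      funext r
      rcases eq_or_ne r r0 with hr | hr
      · subst hr
        show φh r * y' r = _
        simp only [hφh, Function.update_self]
        show (φs r + cs / y' r) * y' r = φs r * y' r + cs
        rw [add_mul, div_mul_cancel₀ _ hr0ne]
      · show φh r * y' r = _
        simp [hφh, hq1, Function.update_of_ne hr]
    have hdotz : ∀ l, dot (u l) z.2 = dot (u l) q1.2 + u l r0 * cs := by
      intro l
      rw [hz2eq, dot_update]
      ring
    have hzP : z ∈ polyP v u σ := by
      intro l
      show 0 ≤ dot (v l) q1.1 - dot (u l) z.2 - σ l
      rw [hdotz l]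
      have h1 : cs * u l r0 ≤ slk l :=
        (le_div_iff₀ ((hpos l).2 r0)).mp (hcsle l)
      simp only [hslk] at h1
      linarith
    have hzW : z ∈ weakF (polyP v u σ) := by
      refine ⟨hzP, ?_⟩
      rintro w hw1 hw2 hwP
      obtain ⟨lst, _, hlst⟩ := Finset.exists_mem_eq_inf' hBU (fun l => slk l / u l r0)
      have hulst : 0 < u lst r0 := (hpos lst).2 r0
      have hslkeq : slk lst = cs * u lst r0 := by
        rw [hcs, hlst]
        field_simp
      set z' : Pt m s := (z.1, Function.update z.2 r0 (w.2 r0)) with hz'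
      have hz'P : z' ∈ polyP v u σ := by
        refine polyP_disposal hpos hwP (fun i => (hw1 i).le) (fun r => ?_)
        rcases eq_or_ne r r0 with hr | hr
        · subst hr; simp [hz', Function.update_self]
        · simp only [hz', Function.update_of_ne hr]
          exact (hw2 r).le
      have h1 := hz'P lst
      have hz2r0 : z.2 r0 = q1.2 r0 + cs := by
        rw [hz2eq]; simp [Function.update_self]
      have hdotz' : dot (u lst) z'.2 = dot (u lst) q1.2 + u lst r0 * (w.2 r0 - q1.2 r0) := by
        show dot (u lst) (Function.update z.2 r0 (w.2 r0)) = _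
        rw [hz2eq, dot_update, dot_update]
        simp [Function.update_self]
        ring
      have h2 : dot (v lst) z'.1 = dot (v lst) q1.1 := rfl
      rw [hdotz', h2] at h1
      have h3 : q1.2 r0 + cs < w.2 r0 := by rw [← hz2r0]; exact hw2 r0
      have h4 : slk lst = dot (v lst) q1.1 - dot (u lst) q1.2 - σ lst := rfl
      have h5 : u lst r0 * (q1.2 r0 + cs) < u lst r0 * (w.2 r0) :=
        mul_lt_mul_of_pos_left h3 hulst
      nlinarith
    have hzS : z ∈ strongF (polyP v u σ) := hPfront ▸ hzW
    have hzT : z ∈ TSet v u σ := by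
      refine ⟨hzP, fun i => ?_, fun r => mul_nonneg (by linarith [hφh1 r]) (hy'0 r), ?_⟩
      · rcases eq_or_ne i i0 with hi | hi
        · subst hi; simp [hz, hθh, Function.update_self, hx'0 i]
        · simp only [hz, hθh]
          rw [Function.update_of_ne hi]
          exact mul_nonneg (hθs i).1 (hx'0 i)
      · intro h0
        have h1 : φh r0 * y' r0 = 0 := congrFun h0 r0
        have h2 : 0 < φh r0 * y' r0 := mul_pos (by linarith [hφh1 r0]) hr0
        linarith
    have hzST : z ∈ strongF (TSet v u σ) := strongP_mem_strongT hzS hzT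
    have hθhB : ∀ i, 0 ≤ θh i ∧ θh i ≤ 1 := by
      intro i
      rcases eq_or_ne i i0 with hi | hi
      · subst hi; simp [hθh, Function.update_self]
      · simp only [hθh]; rw [Function.update_of_ne hi]; exact hθs i
    have hmem' : (1 / ((m:ℝ) + s)) * ((∑ i, θh i) + ∑ r, 1 / φh r)
        ∈ {t : ℝ | ∃ (θ : Fin m → ℝ) (φ : Fin s → ℝ),
        (∀ i, 0 ≤ θ i ∧ θ i ≤ 1) ∧ (∀ r, 1 ≤ φ r) ∧
        ((fun i => θ i * x' i), (fun r => φ r * y' r)) ∈ strongF (TSet v u σ) ∧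
        t = (1 / (m + s : ℝ)) * ((∑ i, θ i) + ∑ r, 1 / φ r)} :=
      ⟨θh, φh, hθhB, hφh1, hzST, rfl⟩
    have hle := hF'.2 hmem'
    -- value comparison
    have hsum1 : ∑ i, θh i = (∑ i, θs i) + 1 := by
      have h1 : ∑ i, (θh i - θs i) = 1 - θs i0 := by
        rw [Finset.sum_eq_single_of_mem i0 (mem_univ i0)
          (fun b _ hb => by simp [hθh, Function.update_of_ne hb])]
        simp [hθh, Function.update_self]
      rw [Finset.sum_sub_distrib] at h1
      rw [hθ0] at h1
      linarith
    have hsum2 : ∑ r, (1:ℝ) / φh r = (∑ r, 1 / φs r) + (1 / φh r0 - 1 / φs r0) := by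
      have h1 : ∑ r, ((1:ℝ) / φh r - 1 / φs r) = 1 / φh r0 - 1 / φs r0 := by
        rw [Finset.sum_eq_single_of_mem r0 (mem_univ r0)
          (fun b _ hb => by simp [hφh, Function.update_of_ne hb])]
      rw [Finset.sum_sub_distrib] at h1
      linarith
    have hφhr0 : 0 < 1 / φh r0 := by
      have := hφh1 r0; positivity
    have hφsr0 : 1 / φs r0 ≤ 1 := by
      rw [div_le_one (by linarith [hφs r0])]
      linarith [hφs r0]
    have hlt : F < (1 / ((m:ℝ) + s)) * ((∑ i, θh i) + ∑ r, 1 / φh r) := by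
      rw [hFval, hsum1, hsum2]
      have : (∑ i, θs i) + ∑ r, 1 / φs r
          < ((∑ i, θs i) + 1) + ((∑ r, 1 / φs r) + (1 / φh r0 - 1 / φs r0)) := by
        linarith
      push_cast
      exact (mul_lt_mul_iff_right₀ hc).mpr this
    linarith
  · -- Case B1 : projection of (θ*,φ*) towards (1,1) along the segment at (x',y')
    -- first, (θ*,φ*) ≠ (1,1)
    have hstrict : (∃ i, θs i < 1) ∨ (∃ r, 1 < φs r) := by
      by_contra hcon
      push_neg at hcon
      obtain ⟨h1, h2⟩ := hcon
      have hθ1 : ∀ i, θs i = 1 := fun i => le_antisymm (hθs i).2 (h1 i)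
      have hφ1 : ∀ r, φs r = 1 := fun r => le_antisymm (h2 r) (hφs r)
      have hps : ((fun i => θs i * x i, fun r => φs r * y r) : Pt m s) = (x, y) := by
        refine Prod.ext ?_ ?_ <;> funext j <;> simp [hθ1, hφ1]
      rw [hps] at hpstar
      refine hpstar.2 (x', y') hdom.1 hdom.2 hne ⟨hxy'P, hx'0, hy'0, hy'ne⟩
    -- the affine slack functions
    set s0 : Fin L → ℝ := fun l =>
      dot (v l) (fun i => θs i * x' i) - dot (u l) (fun r => φs r * y' r) - σ l with hs0
    set s1 : Fin L → ℝ := fun l => dot (v l) x' - dot (u l) y' - σ l with hs1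
    have hs1nn : ∀ l, 0 ≤ s1 l := hxy'P
    set qa : ℝ → Pt m s := fun α =>
      (fun i => (α + (1 - α) * θs i) * x' i, fun r => (α + (1 - α) * φs r) * y' r) with hqa
    have haff : ∀ l α, dot (v l) (qa α).1 - dot (u l) (qa α).2 - σ l
        = (1 - α) * s0 l + α * s1 l := by
      intro l α
      have hv : dot (v l) (qa α).1
          = α * dot (v l) x' + (1 - α) * dot (v l) (fun i => θs i * x' i) := by
        show (∑ i, v l i * ((α + (1 - α) * θs i) * x' i)) = _
        unfold dot
        rw [Finset.mul_sum, Finset.mul_sum, ← Finset.sum_add_distrib]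
        exact Finset.sum_congr rfl fun i _ => by ring
      have hu : dot (u l) (qa α).2
          = α * dot (u l) y' + (1 - α) * dot (u l) (fun r => φs r * y' r) := by
        show (∑ r, u l r * ((α + (1 - α) * φs r) * y' r)) = _
        unfold dot
        rw [Finset.mul_sum, Finset.mul_sum, ← Finset.sum_add_distrib]
        exact Finset.sum_congr rfl fun r _ => by ring
      rw [hv, hu, hs0, hs1]
      ring
    -- bad constraints
    set B : Finset (Fin L) := univ.filter (fun l => s0 l < 0) with hB
    have hBne : B.Nonempty := by
      simp only [polyP, Set.mem_setOf_eq] at hq0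
      push_neg at hq0
      obtain ⟨l, hl⟩ := hq0
      refine ⟨l, ?_⟩
      rw [hB, mem_filter]
      exact ⟨mem_univ l, by rw [hs0]; simpa using hl⟩
    set g : Fin L → ℝ := fun l => (-s0 l) / (s1 l - s0 l) with hg
    have hgpos : ∀ l ∈ B, 0 < g l := by
      intro l hl
      rw [hB, mem_filter] at hl
      have := hs1nn l
      exact div_pos (by linarith) (by linarith)
    have hgle1 : ∀ l ∈ B, g l ≤ 1 := by
      intro l hl
      rw [hB, mem_filter] at hl
      have := hs1nn l
      rw [div_le_one (by linarith)]
      linarith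
    set αs : ℝ := B.sup' hBne g with hαs
    obtain ⟨lst, hlstB, hlst⟩ := Finset.exists_mem_eq_sup' hBne g
    have hlstB' : s0 lst < 0 := by
      rw [hB, mem_filter] at hlstB; exact hlstB.2
    have hαpos : 0 < αs := by
      obtain ⟨l, hl⟩ := hBne
      exact lt_of_lt_of_le (hgpos l hl) (Finset.le_sup' g hl)
    have hαle1 : αs ≤ 1 := Finset.sup'_le hBne g hgle1
    have hqαP : qa αs ∈ polyP v u σ := by
      intro l
      rw [haff l αs]
      by_cases hl : l ∈ B
      · have h1 : g l ≤ αs := Finset.le_sup' g hl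
        rw [hB, mem_filter] at hl
        have h2 := hs1nn l
        have hden : 0 < s1 l - s0 l := by linarith [hl.2]
        have h3 : g l * (s1 l - s0 l) = -s0 l := div_mul_cancel₀ _ (ne_of_gt hden)
        have h4 := mul_le_mul_of_nonneg_right h1 hden.le
        linarith
      · rw [hB, mem_filter] at hl
        push_neg at hl
        have h1 : 0 ≤ s0 l := hl (mem_univ l)
        have h2 := hs1nn l
        have h4 : (0:ℝ) ≤ (1 - αs) * s0 l := mul_nonneg (by linarith) h1
        have h5 : (0:ℝ) ≤ αs * s1 l := mul_nonneg hαpos.le h2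
        linarith
    have hzero : (1 - αs) * s0 lst + αs * s1 lst = 0 := by
      have hden : 0 < s1 lst - s0 lst := by linarith [hs1nn lst]
      have h3 : αs * (s1 lst - s0 lst) = -s0 lst := by
        rw [hαs, hlst, hg]
        exact div_mul_cancel₀ _ (ne_of_gt hden)
      linarith
    have hbelow : ∀ β : ℝ, β < αs → (1 - β) * s0 lst + β * s1 lst < 0 := by
      intro β hβ
      have hden : 0 < s1 lst - s0 lst := by linarith [hs1nn lst]
      nlinarith [mul_pos (sub_pos.mpr hβ) hden]
    -- weak efficiency of qa αs
    have hqW : qa αs ∈ weakF (polyP v u σ) := by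
      refine ⟨hqαP, ?_⟩
      rintro w hw1 hw2 hwP
      have hcont1 : ∀ i, Continuous (fun β : ℝ => (β + (1 - β) * θs i) * x' i) := by
        intro i; continuity
      have hcont2 : ∀ r, Continuous (fun β : ℝ => (β + (1 - β) * φs r) * y' r) := by
        intro r; continuity
      have hev : ∀ᶠ β in nhdsWithin αs (Set.Iio αs),
          ((∀ i, w.1 i ≤ (β + (1 - β) * θs i) * x' i) ∧
           (∀ r, (β + (1 - β) * φs r) * y' r ≤ w.2 r)) := by
        apply Filter.Eventually.and
        · refine Filter.eventually_all.mpr fun i => ?_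
          have hopen : {β : ℝ | w.1 i < (β + (1 - β) * θs i) * x' i} ∈ nhds αs :=
            (isOpen_lt continuous_const (hcont1 i)).mem_nhds (hw1 i)
          exact (Filter.Eventually.filter_mono nhdsWithin_le_nhds hopen).mono
            fun β hβ => le_of_lt hβ
        · refine Filter.eventually_all.mpr fun r => ?_
          have hopen : {β : ℝ | (β + (1 - β) * φs r) * y' r < w.2 r} ∈ nhds αs :=
            (isOpen_lt (hcont2 r) continuous_const).mem_nhds (hw2 r)
          exact (Filter.Eventually.filter_mono nhdsWithin_le_nhds hopen).mono
            fun β hβ => le_of_lt hβ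
      haveI : (nhdsWithin αs (Set.Iio αs)).NeBot := nhdsLT_neBot αs
      obtain ⟨β, ⟨hβ1, hβ2⟩, hβlt⟩ :=
        (hev.and (eventually_mem_nhdsWithin (s := Set.Iio αs) (a := αs))).exists
      have hqβP : qa β ∈ polyP v u σ :=
        polyP_disposal hpos hwP (fun i => hβ1 i) (fun r => hβ2 r)
      have := hqβP lst
      rw [haff lst β] at this
      exact absurd this (not_le.mpr (hbelow β hβlt))
    have hqS : qa αs ∈ strongF (polyP v u σ) := hPfront ▸ hqW
    have hθb : ∀ i, 0 ≤ αs + (1 - αs) * θs i ∧ αs + (1 - αs) * θs i ≤ 1 := by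
      intro i
      have h1 := (hθs i).1
      have h2 := (hθs i).2
      have h3 : (0:ℝ) ≤ (1 - αs) * θs i := mul_nonneg (by linarith) h1
      have h4 : (1 - αs) * θs i ≤ (1 - αs) * 1 := by
        apply mul_le_mul_of_nonneg_left h2; linarith
      constructor <;> linarith
    have hφb : ∀ r, 1 ≤ αs + (1 - αs) * φs r := by
      intro r
      have h1 := hφs r
      have h3 : (1 - αs) * 1 ≤ (1 - αs) * φs r := by
        apply mul_le_mul_of_nonneg_left h1; linarith
      linarith
    have hqT : qa αs ∈ TSet v u σ := by
      refine ⟨hqαP, fun i => mul_nonneg (hθb i).1 (hx'0 i),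
        fun r => mul_nonneg (by linarith [hφb r]) (hy'0 r), ?_⟩
      intro h0
      have h1 : (αs + (1 - αs) * φs r0) * y' r0 = 0 := congrFun h0 r0
      have h2 : 0 < (αs + (1 - αs) * φs r0) * y' r0 :=
        mul_pos (by linarith [hφb r0]) hr0
      linarith
    have hqST : qa αs ∈ strongF (TSet v u σ) := strongP_mem_strongT hqS hqT
    have hmem' : (1 / ((m:ℝ) + s)) * ((∑ i, (αs + (1 - αs) * θs i))
        + ∑ r, 1 / (αs + (1 - αs) * φs r))
        ∈ {t : ℝ | ∃ (θ : Fin m → ℝ) (φ : Fin s → ℝ),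
        (∀ i, 0 ≤ θ i ∧ θ i ≤ 1) ∧ (∀ r, 1 ≤ φ r) ∧
        ((fun i => θ i * x' i), (fun r => φ r * y' r)) ∈ strongF (TSet v u σ) ∧
        t = (1 / (m + s : ℝ)) * ((∑ i, θ i) + ∑ r, 1 / φ r)} :=
      ⟨fun i => αs + (1 - αs) * θs i, fun r => αs + (1 - αs) * φs r,
        hθb, hφb, hqST, rfl⟩
    have hle := hF'.2 hmem'
    -- value comparison
    have hterm1 : ∀ i ∈ univ, θs i ≤ αs + (1 - αs) * θs i := by
      intro i _
      have h2 := (hθs i).2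
      have h3 : (0:ℝ) ≤ αs * (1 - θs i) := mul_nonneg hαpos.le (by linarith)
      linarith
    have hterm2 : ∀ r ∈ univ, 1 / φs r ≤ 1 / (αs + (1 - αs) * φs r) := by
      intro r _
      have h1 := hφs r
      have h2 := hφb r
      apply one_div_le_one_div_of_le (by linarith)
      have h3 : (0:ℝ) ≤ αs * (φs r - 1) := mul_nonneg hαpos.le (by linarith)
      linarith
    have hsums : (∑ i, θs i) + ∑ r, 1 / φs r
        < (∑ i, (αs + (1 - αs) * θs i)) + ∑ r, 1 / (αs + (1 - αs) * φs r) := by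
      rcases hstrict with ⟨i1, hi1⟩ | ⟨r1, hr1⟩
      · have hlt1 : ∑ i, θs i < ∑ i, (αs + (1 - αs) * θs i) :=
          Finset.sum_lt_sum hterm1 ⟨i1, mem_univ i1, by
            have h3 : (0:ℝ) < αs * (1 - θs i1) := mul_pos hαpos (by linarith)
            linarith⟩
        have hle2 : ∑ r, (1:ℝ) / φs r ≤ ∑ r, 1 / (αs + (1 - αs) * φs r) :=
          Finset.sum_le_sum hterm2
        linarith
      · have hle1 : ∑ i, θs i ≤ ∑ i, (αs + (1 - αs) * θs i) :=
          Finset.sum_le_sum hterm1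
        have hlt2 : ∑ r, (1:ℝ) / φs r < ∑ r, 1 / (αs + (1 - αs) * φs r) := by
          refine Finset.sum_lt_sum hterm2 ⟨r1, mem_univ r1, ?_⟩
          apply one_div_lt_one_div_of_lt (by linarith [hφb r1])
          have h3 : (0:ℝ) < αs * (φs r1 - 1) := mul_pos hαpos (by linarith)
          linarith
        linarith
    have hlt : F < (1 / ((m:ℝ) + s)) * ((∑ i, (αs + (1 - αs) * θs i))
        + ∑ r, 1 / (αs + (1 - αs) * φs r)) := by
      rw [hFval]
      exact (mul_lt_mul_iff_right₀ hc).mpr hsums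
    linarith
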